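/- Let f : [a,b) → ℝ be convex, x ∈ [a,b)^n, p nonnegative and q positive probability n-tuples. Let M₁ = max_i(pᵢ/qᵢ) = p_j/q_j at a fixed index j; define p'ᵢ = pᵢ − M₁qᵢ, x'ᵢ = xᵢ for i ≠ j, and p'_j = M₁, x'_j = ∑qᵢxᵢ; set M₂ = max_i(p'ᵢ/qᵢ). Then J(f,x,p) ≤ M₁·J(f,x,q) + M₂·J(f,x',q). -/

import Mathlib

/-- Dragomir-type inequality with possibly signed weights `w`. -/
lemma aux_dragomir {s : Set ℝ} (f : ℝ → ℝ) (hf : ConvexOn ℝ s f)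
    {n : ℕ} (y : Fin n → ℝ) (hy : ∀ i, y i ∈ s) (w q : Fin n → ℝ)
    (hq : ∀ i, 0 < q i) (hqs : ∑ i, q i = 1) (hws : ∑ i, w i = 1)
    {M : ℝ} (hM : 0 < M) (hwq : ∀ i, w i ≤ M * q i)
    (hz : ∑ i, w i * y i ∈ s) :
    ∑ i, w i * f (y i) - f (∑ i, w i * y i) ≤
      M * (∑ i, q i * f (y i) - f (∑ i, q i * y i)) := by
  set z : ℝ := ∑ i, w i * y i with hzdef
  set W : Option (Fin n) → ℝ := fun o => o.elim (1 / M) (fun i => (M * q i - w i) / M) with hW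
  set Y : Option (Fin n) → ℝ := fun o => o.elim z y with hY
  have hW0 : ∀ o ∈ Finset.univ, 0 ≤ W o := by
    rintro (_ | i) _
    · exact div_nonneg zero_le_one hM.le
    · have h := hwq i
      exact div_nonneg (by linarith) hM.le
  have hW1 : ∑ o : Option (Fin n), W o = 1 := by
    rw [Fintype.sum_option]
    simp only [hW, Option.elim]
    rw [← Finset.sum_div]
    have : ∑ i, (M * q i - w i) = M - 1 := by
      rw [Finset.sum_sub_distrib, ← Finset.mul_sum, hqs, hws]; ring
    rw [this]
    field_simp
    ring
  have hWY : ∑ o : Option (Fin n), W o * Y o = ∑ i, q i * y i := by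
    rw [Fintype.sum_option]
    simp only [hW, hY, Option.elim]
    have h1 : ∀ i, (M * q i - w i) / M * y i = q i * y i - (w i * y i) / M := by
      intro i; field_simp
    rw [Finset.sum_congr rfl (fun i _ => h1 i), Finset.sum_sub_distrib, ← Finset.sum_div,
      ← hzdef]
    field_simp
    ring
  have hmem : ∀ o ∈ Finset.univ, Y o ∈ s := by
    rintro (_ | i) _
    · exact hz
    · exact hy i
  have hjensen : f (∑ o : Option (Fin n), W o • Y o) ≤ ∑ o : Option (Fin n), W o • f (Y o) :=
    hf.map_sum_le hW0 hW1 hmem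
  simp only [smul_eq_mul] at hjensen
  rw [hWY] at hjensen
  rw [Fintype.sum_option] at hjensen
  simp only [hW, hY, Option.elim] at hjensen
  have hsum : ∑ i, (M * q i - w i) / M * f (y i)
      = ∑ i, q i * f (y i) - (∑ i, w i * f (y i)) / M := by
    have h1 : ∀ i, (M * q i - w i) / M * f (y i) = q i * f (y i) - (w i * f (y i)) / M := by
      intro i; field_simp
    rw [Finset.sum_congr rfl (fun i _ => h1 i), Finset.sum_sub_distrib, ← Finset.sum_div]
  rw [hsum] at hjensen
  have h := mul_le_mul_of_nonneg_left hjensen hM.le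
  have e1 : M * (1 / M * f z + (∑ i, q i * f (y i) - (∑ i, w i * f (y i)) / M))
      = f z + M * (∑ i, q i * f (y i)) - ∑ i, w i * f (y i) := by
    field_simp; ring
  rw [e1] at h
  rw [mul_sub]
  linarith

/-- The `N = 2` case of Theorem 3:
`J(f,x,p) ≤ M₁·J(f,x,q) + M₂·J(f,x',q)`. -/
theorem stmt13 {a b : ℝ} (f : ℝ → ℝ) (hf : ConvexOn ℝ (Set.Ico a b) f)
    {n : ℕ} (hn : 0 < n) (x : Fin n → ℝ) (hx : ∀ i, x i ∈ Set.Ico a b)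
    (p q : Fin n → ℝ) (hp : ∀ i, 0 ≤ p i) (hq : ∀ i, 0 < q i)
    (hps : ∑ i, p i = 1) (hqs : ∑ i, q i = 1)
    (j : Fin n) (M₁ : ℝ) (hM₁ : M₁ = p j / q j)
    (hmax : ∀ i, p i / q i ≤ M₁)
    (p' x' : Fin n → ℝ)
    (hp' : ∀ i, p' i = if i = j then M₁ else p i - M₁ * q i)
    (hx' : ∀ i, x' i = if i = j then ∑ k, q k * x k else x i)
    (M₂ : ℝ)
    (hM₂ : M₂ = Finset.univ.sup' ⟨⟨0, hn⟩, Finset.mem_univ _⟩ (fun i => p' i / q i)) :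
    ∑ i, p i * f (x i) - f (∑ i, p i * x i) ≤
      M₁ * (∑ i, q i * f (x i) - f (∑ i, q i * x i)) +
      M₂ * (∑ i, q i * f (x' i) - f (∑ i, q i * x' i)) := by
  have hqj : 0 < q j := hq j
  have hpj0 : p j - M₁ * q j = 0 := by
    rw [hM₁]; field_simp; ring
  set S : ℝ := ∑ k, q k * x k with hS
  have hSmem : S ∈ Set.Ico a b := by
    have := (convex_Ico a b).sum_mem (t := Finset.univ)
      (fun i _ => (hq i).le) hqs (fun i _ => hx i)
    simpa [smul_eq_mul] using this
  have hPmem : (∑ i, p i * x i) ∈ Set.Ico a b := by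
    have := (convex_Ico a b).sum_mem (t := Finset.univ)
      (fun i _ => hp i) hps (fun i _ => hx i)
    simpa [smul_eq_mul] using this
  have hM₁1 : 1 ≤ M₁ := by
    have h1 : ∀ i, p i ≤ M₁ * q i := by
      intro i
      have h2 := hmax i
      have hqi := hq i
      calc p i = p i / q i * q i := by field_simp
        _ ≤ M₁ * q i := mul_le_mul_of_nonneg_right h2 hqi.le
    calc (1 : ℝ) = ∑ i, p i := hps.symm
      _ ≤ ∑ i, M₁ * q i := Finset.sum_le_sum fun i _ => h1 i
      _ = M₁ := by rw [← Finset.mul_sum, hqs, mul_one]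
  have hqj1 : q j ≤ 1 := by
    rw [← hqs]
    exact Finset.single_le_sum (fun i _ => (hq i).le) (Finset.mem_univ j)
  have hM₂ge : M₁ / q j ≤ M₂ := by
    rw [hM₂]
    have := Finset.le_sup' (f := fun i => p' i / q i) (Finset.mem_univ j)
    simpa [hp' j] using this
  have hM₁qj : M₁ ≤ M₁ / q j := by
    rw [le_div_iff₀ hqj]
    nlinarith
  have hM₂pos : 0 < M₂ := by linarith
  have hp's : ∑ i, p' i = 1 := by
    have hdec : ∀ i, p' i = (p i - M₁ * q i) + (if i = j then M₁ else 0) := by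
      intro i
      rw [hp' i]
      by_cases h : i = j
      · subst h; simp [hpj0]
      · simp [h]
    rw [Finset.sum_congr rfl (fun i _ => hdec i), Finset.sum_add_distrib,
      Finset.sum_sub_distrib, ← Finset.mul_sum, hps, hqs, Finset.sum_ite_eq' Finset.univ j]
    simp
  have hp'q : ∀ i, p' i ≤ M₂ * q i := by
    intro i
    have h1 : p' i / q i ≤ M₂ := by
      rw [hM₂]
      exact Finset.le_sup' (f := fun i => p' i / q i) (Finset.mem_univ i)
    have hqi := hq i
    calc p' i = p' i / q i * q i := by field_simp
      _ ≤ M₂ * q i := mul_le_mul_of_nonneg_right h1 hqi.le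
  -- a generic splitting identity
  have hsplit : ∀ (g : Fin n → ℝ) (c : ℝ),
      ∑ i, ((p i - M₁ * q i) * g i + if i = j then c else 0)
        = ∑ i, p i * g i - M₁ * ∑ i, q i * g i + c := by
    intro g c
    rw [Finset.sum_add_distrib, Finset.sum_ite_eq' Finset.univ j]
    simp only [Finset.mem_univ, if_true]
    congr 1
    rw [Finset.mul_sum, ← Finset.sum_sub_distrib]
    exact Finset.sum_congr rfl fun i _ => by ring
  have hid1 : ∑ i, p' i * x' i = ∑ i, p i * x i := by
    have hterm : ∀ i, p' i * x' i = (p i - M₁ * q i) * x i + if i = j then M₁ * S else 0 := by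
      intro i
      rw [hp' i, hx' i]
      by_cases h : i = j
      · subst h
        simp [hpj0]
      · simp [h]
    rw [Finset.sum_congr rfl (fun i _ => hterm i), hsplit x (M₁ * S), ← hS]
    ring
  have hid2 : ∑ i, p' i * f (x' i)
      = ∑ i, p i * f (x i) - M₁ * ∑ i, q i * f (x i) + M₁ * f S := by
    have hterm : ∀ i, p' i * f (x' i)
        = (p i - M₁ * q i) * f (x i) + if i = j then M₁ * f S else 0 := by
      intro i
      rw [hp' i, hx' i]
      by_cases h : i = j
      · subst h
        simp [hpj0]
      · simp [h]
    rw [Finset.sum_congr rfl (fun i _ => hterm i), hsplit (fun i => f (x i)) (M₁ * f S)]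
  have hx'mem : ∀ i, x' i ∈ Set.Ico a b := by
    intro i
    rw [hx' i]
    by_cases h : i = j
    · simp [h, hSmem]
    · simp [h, hx i]
  have hz : ∑ i, p' i * x' i ∈ Set.Ico a b := by rw [hid1]; exact hPmem
  have key := aux_dragomir f hf x' hx'mem p' q hq hqs hp's hM₂pos hp'q hz
  rw [hid1, hid2] at key
  linarith
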